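/- For complex w = e^{x₁+ix₂} - 1/2 and y = e^{t₁+it₂} - 1/2 with x₁, t₁ ≥ -ε and |x₂|, |t₂| ≤ ε, where 0 < ε < (1/4)·log 3, the ratio (|w|+|y|)/(Re(w)+Re(y)) is bounded above by (1 + 3^{1/4}/2)/((√3 - 3^{1/4})/2). -/

import Mathlib

open Complex Real

lemma aux_key (ε : ℝ) (hε0 : 0 < ε) (hε : ε < (1/4) * Real.log 3)
    (x₁ x₂ : ℝ) (hx₁ : -ε ≤ x₁) (hx₂ : |x₂| ≤ ε) :
    ‖Complex.exp (x₁ + x₂ * Complex.I) - 1/2‖ ≤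
      (1 + (3 : ℝ) ^ ((1 : ℝ)/4) / 2) * Real.exp x₁ ∧
    ((Real.sqrt 3 - (3 : ℝ) ^ ((1 : ℝ)/4)) / 2) * Real.exp x₁ ≤
      (Complex.exp (x₁ + x₂ * Complex.I) - 1/2).re := by
  have hrpow : (3 : ℝ) ^ ((1 : ℝ)/4) = Real.exp ((1/4) * Real.log 3) := by
    rw [Real.rpow_def_of_pos (by norm_num)]; ring_nf
  have hone : (1 : ℝ) ≤ Real.exp x₁ * (3 : ℝ) ^ ((1 : ℝ)/4) := by
    have h1 : Real.exp (-ε) * Real.exp ε = 1 := by rw [← Real.exp_add]; simp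
    have h2 : Real.exp (-ε) ≤ Real.exp x₁ := Real.exp_le_exp.2 hx₁
    have h3 : Real.exp ε ≤ (3 : ℝ) ^ ((1 : ℝ)/4) := by
      rw [hrpow]; exact Real.exp_le_exp.2 hε.le
    calc (1:ℝ) = Real.exp (-ε) * Real.exp ε := h1.symm
      _ ≤ Real.exp x₁ * (3 : ℝ) ^ ((1 : ℝ)/4) :=
        mul_le_mul h2 h3 (Real.exp_pos _).le (Real.exp_pos _).le
  have hlog3 : Real.log 3 ≤ 2 := by
    have := Real.log_le_sub_one_of_pos (x := 3) (by norm_num); linarith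
  have hpi := Real.pi_gt_three
  have hεsmall : ε < π / 6 := by nlinarith
  have hcos : Real.sqrt 3 / 2 ≤ Real.cos x₂ := by
    have h1 : Real.cos (π/6) ≤ Real.cos |x₂| :=
      Real.cos_le_cos_of_nonneg_of_le_pi (abs_nonneg _) (by linarith) (by linarith)
    rw [Real.cos_pi_div_six] at h1
    rwa [Real.cos_abs] at h1
  have hnorm : ‖Complex.exp (x₁ + x₂ * Complex.I)‖ = Real.exp x₁ := by
    rw [Complex.norm_exp]; simp
  have hre : (Complex.exp (x₁ + x₂ * Complex.I)).re = Real.exp x₁ * Real.cos x₂ := by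
    rw [Complex.exp_re]; simp
  constructor
  · calc ‖Complex.exp (x₁ + x₂ * Complex.I) - 1/2‖
        ≤ ‖Complex.exp (x₁ + x₂ * Complex.I)‖ + ‖(1/2 : ℂ)‖ := norm_sub_le _ _
      _ = Real.exp x₁ + 1/2 := by rw [hnorm]; norm_num
      _ ≤ (1 + (3 : ℝ) ^ ((1 : ℝ)/4) / 2) * Real.exp x₁ := by nlinarith
  · have h2 : (Complex.exp (x₁ + x₂ * Complex.I) - 1/2).re
        = Real.exp x₁ * Real.cos x₂ - 1/2 := by
      simp [Complex.sub_re, hre]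
    rw [h2]
    have hA := Real.exp_pos x₁
    nlinarith

/-- For `w = e^{x₁+ix₂} - 1/2`, `y = e^{t₁+it₂} - 1/2` with `x₁, t₁ ≥ -ε`,
`|x₂|, |t₂| ≤ ε` and `0 < ε < (1/4)·log 3`, the ratio
`(|w|+|y|)/(Re w + Re y)` is bounded by `(1 + 3^{1/4}/2)/((√3 - 3^{1/4})/2)`. -/
theorem ratio_bound (ε : ℝ) (hε0 : 0 < ε) (hε : ε < (1/4) * Real.log 3)
    (x₁ x₂ t₁ t₂ : ℝ) (hx₁ : -ε ≤ x₁) (hx₂ : |x₂| ≤ ε)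
    (ht₁ : -ε ≤ t₁) (ht₂ : |t₂| ≤ ε) :
    (‖Complex.exp (x₁ + x₂ * Complex.I) - 1/2‖ +
        ‖Complex.exp (t₁ + t₂ * Complex.I) - 1/2‖) /
      ((Complex.exp (x₁ + x₂ * Complex.I) - 1/2).re +
        (Complex.exp (t₁ + t₂ * Complex.I) - 1/2).re) ≤
      (1 + (3 : ℝ) ^ ((1 : ℝ)/4) / 2) / ((Real.sqrt 3 - (3 : ℝ) ^ ((1 : ℝ)/4)) / 2) := by
  obtain ⟨hNx, hDx⟩ := aux_key ε hε0 hε x₁ x₂ hx₁ hx₂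
  obtain ⟨hNt, hDt⟩ := aux_key ε hε0 hε t₁ t₂ ht₁ ht₂
  set c₁ : ℝ := 1 + (3 : ℝ) ^ ((1 : ℝ)/4) / 2 with hc₁
  set c₂ : ℝ := (Real.sqrt 3 - (3 : ℝ) ^ ((1 : ℝ)/4)) / 2 with hc₂
  have hc₂pos : 0 < c₂ := by
    have h1 : (3 : ℝ) ^ ((1 : ℝ)/4) < (3 : ℝ) ^ ((1 : ℝ)/2) :=
      Real.rpow_lt_rpow_of_exponent_lt (by norm_num) (by norm_num)
    have h2 : Real.sqrt 3 = (3 : ℝ) ^ ((1 : ℝ)/2) := Real.sqrt_eq_rpow 3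
    rw [hc₂, h2]; linarith
  have hA := Real.exp_pos x₁
  have hB := Real.exp_pos t₁
  set A := Real.exp x₁
  set B := Real.exp t₁
  have hDpos : 0 < c₂ * (A + B) := by positivity
  calc (‖Complex.exp (x₁ + x₂ * Complex.I) - 1/2‖ +
        ‖Complex.exp (t₁ + t₂ * Complex.I) - 1/2‖) /
      ((Complex.exp (x₁ + x₂ * Complex.I) - 1/2).re +
        (Complex.exp (t₁ + t₂ * Complex.I) - 1/2).re)
      ≤ (c₁ * (A + B)) / (c₂ * (A + B)) := by
        apply div_le_div₀ (by positivity) (by rw [mul_add]; exact add_le_add hNx hNt) hDpos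
        linarith
    _ = c₁ / c₂ := by
        rw [mul_div_mul_right _ _ (by positivity : A + B ≠ 0)]
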